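/- Let Y be a compact Hausdorff space, let X ⊆ Y be a closed subspace, and suppose there exist an open set U ⊆ Y with X ⊆ U and a continuous retraction r : U → X (r(x) = x for x ∈ X). Then I_f(X) is a neighborhood retract of I_f(Y): there exist an open subset W of I_f(Y) containing I_f(X) and a continuous map R : W → I_f(X) with R(μ) = μ for every μ ∈ I_f(X), where I_f(X) is identified with its image in I_f(Y) under the map induced by the inclusion X ↪ Y. -/

import Mathlib

open Real Set Topology

/-- The Dirac measure `δ_x` on `X`, as a functional on `C(X, ℝ)`: `δ_x(φ) = φ(x)`. -/
def dirac (X : Type*) [TopologicalSpace X] (x : X) : C(X, ℝ) → ℝ := fun φ => φ x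

/-- The max-plus combination `⊕_{i=1}^n λ_i ⊙ δ_{x_i}`, i.e. the functional
`φ ↦ max_{1 ≤ i ≤ n} (λ_i + φ(x_i))`. -/
noncomputable def maxPlus {X : Type*} [TopologicalSpace X] {n : ℕ}
    (lam : Fin n → ℝ) (x : Fin n → X) : C(X, ℝ) → ℝ :=
  fun φ => ⨆ i, (lam i + φ (x i))

/-- `μ : C(X, ℝ) → ℝ` is an idempotent probability measure:
(1) `μ(c_λ) = λ` for constant functions; (2) `μ(λ + φ) = λ + μ(φ)`;
(3) `μ(max(φ, ψ)) = max(μ(φ), μ(ψ))`. -/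
def IsIPM {X : Type*} [TopologicalSpace X] (μ : C(X, ℝ) → ℝ) : Prop :=
  (∀ c : ℝ, μ (ContinuousMap.const X c) = c) ∧
  (∀ (c : ℝ) (φ : C(X, ℝ)), μ (ContinuousMap.const X c + φ) = c + μ φ) ∧
  (∀ φ ψ : C(X, ℝ), μ (φ ⊔ ψ) = max (μ φ) (μ ψ))

/-- Membership in `I_ω(X)`: idempotent probability measures with finite support, i.e.
`μ = ⊕_{i=1}^n λ_i ⊙ δ_{x_i}` with `x_i` pairwise distinct, `λ_i ≤ 0` and `max_i λ_i = 0`. -/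
def IsFS {X : Type*} [TopologicalSpace X] (μ : C(X, ℝ) → ℝ) : Prop :=
  ∃ n : ℕ, 0 < n ∧ ∃ (x : Fin n → X) (lam : Fin n → ℝ),
    Function.Injective x ∧ (∀ i, lam i ≤ 0) ∧ (∃ i, lam i = 0) ∧ μ = maxPlus lam x

/-- Membership in `I_f(X)`: `μ = ⊕_{i=1}^n λ_i ⊙ δ_{x_i}` with `x_i` pairwise distinct,
a unique index `i₀` with `λ_{i₀} = 0`, and `λ_i ≤ -ln(n+1)` for every `i ≠ i₀`. -/
def IsIf {X : Type*} [TopologicalSpace X] (μ : C(X, ℝ) → ℝ) : Prop :=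
  ∃ n : ℕ, 0 < n ∧ ∃ (x : Fin n → X) (lam : Fin n → ℝ) (i0 : Fin n),
    Function.Injective x ∧ lam i0 = 0 ∧
    (∀ i, i ≠ i0 → lam i ≤ -Real.log (n + 1)) ∧ μ = maxPlus lam x

/-- The pushforward `I_f(f)(μ)(ψ) = μ(ψ ∘ f)`. -/
def push {X Y : Type*} [TopologicalSpace X] [TopologicalSpace Y]
    (f : C(X, Y)) (μ : C(X, ℝ) → ℝ) : C(Y, ℝ) → ℝ :=
  fun ψ => μ (ψ.comp f)

/-- The inclusion `Xs ↪ Y` as a continuous map. -/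
def inclMap {Y : Type*} [TopologicalSpace Y] (Xs : Set Y) : C(Xs, Y) :=
  ⟨Subtype.val, continuous_subtype_val⟩


section AuxIPM
open Filter


lemma fin_bdd {ι : Type*} [Finite ι] (f : ι → ℝ) : BddAbove (Set.range f) :=
  (Set.finite_range f).bddAbove

noncomputable def s0 : ℝ := Real.log 2 / 2

lemma log2_pos : (0:ℝ) < Real.log 2 := Real.log_pos (by norm_num)

lemma s0_pos : (0:ℝ) < s0 := by have := log2_pos; unfold s0; linarith

lemma s0_lt_log2 : s0 < Real.log 2 := by have := log2_pos; unfold s0; linarith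

/-- the "top point" of an idempotent measure, detected on small test functions. -/
def HasTop {Z : Type*} [TopologicalSpace Z] (μ : C(Z, ℝ) → ℝ) (p : Z) : Prop :=
  ∀ φ : C(Z, ℝ), (∀ y, φ y ∈ Icc (-s0) 0) → μ φ = φ p

lemma hasTop_maxPlus {Z : Type*} [TopologicalSpace Z] {n : ℕ}
    (x : Fin n → Z) (lam : Fin n → ℝ) (i0 : Fin n)
    (h0 : lam i0 = 0) (hle : ∀ i, i ≠ i0 → lam i ≤ -Real.log (n + 1)) :
    HasTop (maxPlus lam x) (x i0) := by
  intro φ hφ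
  haveI : Nonempty (Fin n) := ⟨i0⟩
  have hn : 1 ≤ n := i0.pos
  apply le_antisymm
  · apply ciSup_le
    intro i
    by_cases h : i = i0
    · subst h; rw [h0]; simp
    · have h1 := hle i h
      have h2 : Real.log 2 ≤ Real.log (n + 1) := by
        apply Real.log_le_log (by norm_num)
        have : (1:ℝ) ≤ (n:ℝ) := by exact_mod_cast hn
        linarith
      have h3 := (hφ (x i)).2
      have h4 := (hφ (x i0)).1
      have h5 := s0_lt_log2
      linarith
  · have := le_ciSup (fin_bdd (fun i => lam i + φ (x i))) i0
    rw [h0] at this; simpa [maxPlus] using this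

lemma IsIf.exists_hasTop {Z : Type*} [TopologicalSpace Z] {μ : C(Z, ℝ) → ℝ}
    (h : IsIf μ) : ∃ p, HasTop μ p := by
  obtain ⟨n, hn, x, lam, i0, hinj, h0, hb, rfl⟩ := h
  exact ⟨x i0, hasTop_maxPlus x lam i0 h0 hb⟩

noncomputable def topPt {Z : Type*} [TopologicalSpace Z]
    (μ : {μ : C(Z, ℝ) → ℝ // IsIf μ}) : Z :=
  (IsIf.exists_hasTop μ.2).choose

lemma topPt_spec {Z : Type*} [TopologicalSpace Z]
    (μ : {μ : C(Z, ℝ) → ℝ // IsIf μ}) : HasTop μ.1 (topPt μ) :=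
  (IsIf.exists_hasTop μ.2).choose_spec

/-- Urysohn-type small test function. -/
lemma exists_small_fun {Y : Type*} [TopologicalSpace Y] [NormalSpace Y]
    (A B : Set Y) (hA : IsClosed A) (hB : IsClosed B) (hd : Disjoint A B) :
    ∃ φ : C(Y, ℝ), (∀ y, φ y ∈ Icc (-s0) 0) ∧ (∀ y ∈ A, φ y = -s0) ∧ ∀ y ∈ B, φ y = 0 := by
  obtain ⟨f, hf0, hf1, hf01⟩ := exists_continuous_zero_one_of_isClosed hA hB hd
  refine ⟨⟨fun y => s0 * f y - s0, by continuity⟩, ?_, ?_, ?_⟩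
  · intro y
    have h1 := (hf01 y).1
    have h2 := (hf01 y).2
    have := s0_pos
    constructor <;> · simp only [ContinuousMap.coe_mk]; nlinarith
  · intro y hy
    have : f y = 0 := hf0 hy
    simp [this]
  · intro y hy
    have : f y = 1 := hf1 hy
    simp [this]

lemma hasTop_unique {Y : Type*} [TopologicalSpace Y] [NormalSpace Y] [T1Space Y]
    {μ : C(Y, ℝ) → ℝ} {p q : Y} (hp : HasTop μ p) (hq : HasTop μ q) : p = q := by
  by_contra hne
  obtain ⟨φ, h1, h2, h3⟩ := exists_small_fun {p} {q} isClosed_singleton isClosed_singleton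
    (by simpa [Set.disjoint_singleton] using hne)
  have e1 := hp φ h1
  have e2 := hq φ h1
  rw [h2 p rfl] at e1
  rw [h3 q rfl] at e2
  have := s0_pos
  linarith [e1 ▸ e2]

lemma hasTop_mem {Y : Type*} [TopologicalSpace Y] {μ : C(Y, ℝ) → ℝ} {p : Y} {O : Set Y}
    (h : HasTop μ p) (φ : C(Y, ℝ)) (hφ : ∀ y, φ y ∈ Icc (-s0) 0)
    (hoff : ∀ y ∉ O, φ y = -s0) (hμ : -s0 / 2 < μ φ) : p ∈ O := by
  by_contra hc
  have := h φ hφ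
  rw [hoff p hc] at this
  have := s0_pos
  linarith

/-- nonexpansiveness of finitely supported idempotent measures. -/
lemma IsIf.abs_sub_le {Z : Type*} [TopologicalSpace Z] {μ : C(Z, ℝ) → ℝ}
    (h : IsIf μ) (F G : C(Z, ℝ)) (d : ℝ) (hd : ∀ y, |F y - G y| ≤ d) :
    |μ F - μ G| ≤ d := by
  obtain ⟨n, hn, x, lam, i0, hinj, h0, hb, rfl⟩ := h
  haveI : Nonempty (Fin n) := ⟨i0⟩
  have key : ∀ (F G : C(Z, ℝ)), (∀ y, F y - G y ≤ d) →
      maxPlus lam x F ≤ maxPlus lam x G + d := by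
    intro F G hFG
    apply ciSup_le
    intro i
    have h1 : lam i + G (x i) ≤ maxPlus lam x G :=
      le_ciSup (fin_bdd (fun i => lam i + G (x i))) i
    have := hFG (x i)
    linarith
  have h1 := key F G (fun y => (abs_le.mp (hd y)).2)
  have h2 := key G F (fun y => by have := (abs_le.mp (hd y)).1; linarith)
  rw [abs_le]; constructor <;> linarith

/-- grouping a finite (non-injective) family into a genuine `IsIf` representation. -/
lemma isIf_of_family {Z : Type*} [TopologicalSpace Z] [DecidableEq Z] {ι : Type*} [Fintype ι]
    (w : ι → Z) (κ : ι → ℝ) (istar : ι) (h0 : κ istar = 0) (hneg : ∀ a, κ a ≤ 0)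
    (N : ℕ) (hcard : (Finset.image w Finset.univ).card ≤ N)
    (hb : ∀ a, w a ≠ w istar → κ a ≤ -Real.log (N + 1)) :
    IsIf (fun χ : C(Z, ℝ) => ⨆ a, (κ a + χ (w a))) := by
  classical
  haveI : Nonempty ι := ⟨istar⟩
  set E := Finset.image w Finset.univ with hE
  have hwE : ∀ a, w a ∈ E := fun a => Finset.mem_image_of_mem w (Finset.mem_univ a)
  have hEne : E.Nonempty := ⟨w istar, hwE istar⟩
  set n' := E.card with hn'def
  have hn' : 0 < n' := Finset.card_pos.mpr hEne
  haveI : Nonempty (Fin n') := Fin.pos_iff_nonempty.mp hn'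
  set e := E.equivFin with he
  set x' : Fin n' → Z := fun j => ((e.symm j : E) : Z) with hx'
  have hx'inj : Function.Injective x' := fun a b hab =>
    e.symm.injective (Subtype.ext hab)
  set Sj : Fin n' → Finset ι := fun j => Finset.univ.filter (fun a => w a = x' j) with hSj
  have hSne : ∀ j, (Sj j).Nonempty := by
    intro j
    have : (x' j) ∈ E := (e.symm j).2
    rw [hE, Finset.mem_image] at this
    obtain ⟨a, _, ha⟩ := this
    exact ⟨a, by simp [hSj, ha]⟩
  set lam' : Fin n' → ℝ := fun j => (Sj j).sup' (hSne j) κ with hlam'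
  set j0 : Fin n' := e ⟨w istar, hwE istar⟩ with hj0
  have hx'j0 : x' j0 = w istar := by simp [hx', hj0]
  have hmemS : ∀ a, a ∈ Sj (e ⟨w a, hwE a⟩) := by
    intro a; simp [hSj, hx']
  refine ⟨n', hn', x', lam', j0, hx'inj, ?_, ?_, ?_⟩
  · -- lam' j0 = 0
    apply le_antisymm
    · exact Finset.sup'_le _ _ (fun a _ => hneg a)
    · have : istar ∈ Sj j0 := by simpa [hj0] using hmemS istar
      calc (0:ℝ) = κ istar := h0.symm
        _ ≤ _ := Finset.le_sup' κ this
  · -- bounds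
    intro j hj
    apply Finset.sup'_le
    intro a ha
    have hwa : w a = x' j := by
      rw [hSj] at ha; simpa using (Finset.mem_filter.mp ha).2
    have hne : w a ≠ w istar := by
      rw [hwa, ← hx'j0]
      exact fun hcon => hj (hx'inj hcon)
    have h1 := hb a hne
    have h2 : Real.log ((n':ℝ) + 1) ≤ Real.log ((N:ℝ) + 1) := by
      apply Real.log_le_log (by positivity)
      have : (n':ℝ) ≤ (N:ℝ) := by exact_mod_cast hcard
      linarith
    push_cast
    linarith
  · -- functional equality
    funext χ
    show (⨆ a, (κ a + χ (w a))) = ⨆ j, (lam' j + χ (x' j))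
    apply le_antisymm
    · apply ciSup_le
      intro a
      have hxj : x' (e ⟨w a, hwE a⟩) = w a := by simp [hx']
      have h1 : κ a ≤ lam' (e ⟨w a, hwE a⟩) := Finset.le_sup' κ (hmemS a)
      calc κ a + χ (w a) ≤ lam' (e ⟨w a, hwE a⟩) + χ (x' (e ⟨w a, hwE a⟩)) := by
            rw [hxj]; linarith
        _ ≤ _ := le_ciSup (fin_bdd (fun j => lam' j + χ (x' j))) (e ⟨w a, hwE a⟩)
    · apply ciSup_le
      intro j
      obtain ⟨a, ha, hsup⟩ := Finset.exists_mem_eq_sup' (hSne j) κ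
      have hwa : w a = x' j := by
        rw [hSj] at ha; simpa using (Finset.mem_filter.mp ha).2
      have hlj : lam' j = κ a := hsup
      calc lam' j + χ (x' j) = κ a + χ (w a) := by rw [hlj, hwa]
        _ ≤ _ := le_ciSup (fin_bdd (fun a => κ a + χ (w a))) a

----------------------------------------------------------------
-- retraction machinery

open Classical in
noncomputable def rbar {Y : Type*} [TopologicalSpace Y] {Xs U : Set Y}
    (r : C(U, Xs)) : Y → Y :=
  fun y => if h : y ∈ U then ((r ⟨y, h⟩ : Xs) : Y) else y

lemma continuousOn_rbar {Y : Type*} [TopologicalSpace Y] {Xs U : Set Y}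
    (r : C(U, Xs)) : ContinuousOn (rbar r) U := by
  rw [continuousOn_iff_continuous_restrict]
  have h : U.restrict (rbar r) = fun z => ((r z : Xs) : Y) := by
    funext z
    simp [rbar, Set.restrict, z.2]
  change Continuous (U.restrict (rbar r))
  rw [h]
  exact continuous_subtype_val.comp (map_continuous r)

open Classical in
noncomputable def Ffun {Y : Type*} [TopologicalSpace Y] {Xs U : Set Y}
    (r : C(U, Xs)) (u : C(Y, ℝ)) (ψ : C(Y, ℝ)) (c : ℝ) : Y → ℝ :=
  fun y => if u y ≠ 0 then max c (ψ (rbar r y) + Real.log (u y)) else c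

section Main

variable {Y : Type*} [TopologicalSpace Y] [CompactSpace Y] [T2Space Y]
variable {Xs U V1 V2 : Set Y} (r : C(U, Xs)) (u : C(Y, ℝ))

lemma continuous_Ffun (ψ : C(Y, ℝ)) (c : ℝ)
    (hUo : IsOpen U) (hsupp : ∀ y, u y ≠ 0 → y ∈ V2) (hV2U : V2 ⊆ U) (hu0 : ∀ y, 0 ≤ u y) :
    Continuous (Ffun r u ψ c) := by
  rw [continuous_iff_continuousAt]
  intro y0
  by_cases h0 : u y0 = 0
  · -- locally constant `c` near a zero of `u`
    set ε := Real.exp (c - ‖ψ‖) with hεd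
    have hεpos : 0 < ε := Real.exp_pos _
    have hmem : {y | u y < ε} ∈ 𝓝 y0 :=
      (isOpen_lt (map_continuous u) continuous_const).mem_nhds (by simp [h0, hεpos])
    have heq : Ffun r u ψ c =ᶠ[𝓝 y0] fun _ => c := by
      apply Filter.eventually_of_mem hmem
      intro y hy
      by_cases hne : u y ≠ 0
      · have hpos : 0 < u y := lt_of_le_of_ne (hu0 y) (Ne.symm hne)
        have hlog : Real.log (u y) < c - ‖ψ‖ := by
          have := Real.log_lt_log hpos hy
          rwa [hεd, Real.log_exp] at this
        have hψb : ψ (rbar r y) ≤ ‖ψ‖ := by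
          have := ψ.norm_coe_le_norm (rbar r y)
          rw [Real.norm_eq_abs] at this
          exact (abs_le.mp this).2
        have : ψ (rbar r y) + Real.log (u y) ≤ c := by linarith
        simp [Ffun, hne, max_eq_left this]
      · simp [Ffun, hne]
    exact (continuousAt_congr heq).mpr continuousAt_const
  · -- near a point where `u ≠ 0`
    have hy0V2 : y0 ∈ V2 := hsupp _ h0
    have hy0U : y0 ∈ U := hV2U hy0V2
    have hrc : ContinuousOn (fun y => ψ (rbar r y)) U :=
      (map_continuous ψ).comp_continuousOn (continuousOn_rbar r)
    have hlogc : ContinuousAt (fun y => Real.log (u y)) y0 :=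
      (Real.continuousAt_log h0).comp (map_continuous u).continuousAt
    have h1 : ContinuousAt (fun y => max c (ψ (rbar r y) + Real.log (u y))) y0 :=
      continuousAt_const.max ((hrc.continuousAt (hUo.mem_nhds hy0U)).add hlogc)
    have hopen : IsOpen {y | u y ≠ 0} := by
      have : {y | u y ≠ 0} = u ⁻¹' {t | t ≠ 0} := rfl
      rw [this]
      exact isOpen_ne.preimage (map_continuous u)
    have heq : Ffun r u ψ c =ᶠ[𝓝 y0]
        fun y => max c (ψ (rbar r y) + Real.log (u y)) := by
      apply Filter.eventually_of_mem (hopen.mem_nhds h0)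
      intro y hy
      have hy' : u y ≠ 0 := hy
      simp only [Ffun]
      rw [if_pos hy']
    exact (continuousAt_congr heq).mpr h1

noncomputable def Fmap (ψ : C(Y, ℝ)) (c : ℝ)
    (hUo : IsOpen U) (hsupp : ∀ y, u y ≠ 0 → y ∈ V2) (hV2U : V2 ⊆ U) (hu0 : ∀ y, 0 ≤ u y) :
    C(Y, ℝ) :=
  ⟨Ffun r u ψ c, continuous_Ffun r u ψ c hUo hsupp hV2U hu0⟩

noncomputable def Rfull (hUo : IsOpen U) (hsupp : ∀ y, u y ≠ 0 → y ∈ V2) (hV2U : V2 ⊆ U)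
    (hu0 : ∀ y, 0 ≤ u y) (μ : {μ : C(Y, ℝ) → ℝ // IsIf μ}) : C(Y, ℝ) → ℝ :=
  fun ψ => μ.1 (Fmap r u ψ (ψ (rbar r (topPt μ)) - 1) hUo hsupp hV2U hu0)

end Main

section Main2

variable {Y : Type*} [TopologicalSpace Y] [CompactSpace Y] [T2Space Y]
variable {Xs U V1 V2 : Set Y} (r : C(U, Xs)) (u : C(Y, ℝ))

lemma topPt_mem_Xs (μ : {μ : C(Y, ℝ) → ℝ // IsIf μ})
    (hμ : μ.1 ∈ push (inclMap Xs) '' {ν : C(Xs, ℝ) → ℝ | IsIf ν}) : topPt μ ∈ Xs := by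
  obtain ⟨ν, hν, hpush⟩ := hμ
  obtain ⟨m, hm, z, κ0, j0, hinj, h00, hb0, rfl⟩ := hν
  have hps : push (inclMap Xs) (maxPlus κ0 z) = maxPlus κ0 (fun j => ((z j : Xs) : Y)) := rfl
  have h1 : HasTop μ.1 ((z j0 : Xs) : Y) := by
    rw [← hpush, hps]
    exact hasTop_maxPlus _ κ0 j0 h00 hb0
  rw [hasTop_unique (topPt_spec μ) h1]
  exact (z j0).2

lemma Rfull_mem (hUo : IsOpen U) (hsupp : ∀ y, u y ≠ 0 → y ∈ V2) (hV2U : V2 ⊆ U)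
    (hu0 : ∀ y, 0 ≤ u y) (hu1 : ∀ y, u y ≤ 1)
    (huV1 : ∀ y ∈ V1, u y = 1) (hV1U : V1 ⊆ U)
    (μ : {μ : C(Y, ℝ) → ℝ // IsIf μ}) (htop : topPt μ ∈ V1) :
    ∃ ν : C(Xs, ℝ) → ℝ, IsIf ν ∧
      push (inclMap Xs) ν = Rfull r u hUo hsupp hV2U hu0 μ := by
  classical
  obtain ⟨n, hn, x, lam, i0, hinj, h0, hb, hμeq⟩ := μ.2
  haveI : Nonempty (Fin n) := ⟨i0⟩
  have hn1 : (1:ℝ) ≤ (n:ℝ) := by exact_mod_cast hn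
  have hTop : topPt μ = x i0 :=
    hasTop_unique (topPt_spec μ) (by rw [hμeq]; exact hasTop_maxPlus x lam i0 h0 hb)
  have hxi0V1 : x i0 ∈ V1 := hTop ▸ htop
  have hxi0U : x i0 ∈ U := hV1U hxi0V1
  have hui0 : u (x i0) = 1 := huV1 _ hxi0V1
  set t0 : Xs := r ⟨x i0, hxi0U⟩ with ht0
  have lamle : ∀ i, lam i ≤ 0 := by
    intro i
    by_cases h : i = i0
    · rw [h, h0]
    · refine (hb i h).trans ?_
      have hlog : (0:ℝ) ≤ Real.log ((n:ℝ) + 1) := Real.log_nonneg (by linarith)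
      linarith
  set w : Fin n ⊕ Fin n → Xs := Sum.elim (fun _ => t0)
      (fun i => if h : u (x i) ≠ 0 then r ⟨x i, hV2U (hsupp _ h)⟩ else t0) with hw
  set κ : Fin n ⊕ Fin n → ℝ := Sum.elim (fun i => lam i - 1)
      (fun i => if u (x i) ≠ 0 then lam i + Real.log (u (x i)) else lam i - 1) with hκ
  have hu10 : u (x i0) ≠ 0 := by rw [hui0]; norm_num
  have hwr : w (Sum.inr i0) = t0 := by
    rw [hw]; simp only [Sum.elim_inr]; rw [dif_pos hu10]
  have hwl : ∀ i, w (Sum.inl i) = t0 := fun i => rfl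
  have hκr : κ (Sum.inr i0) = 0 := by
    rw [hκ]; simp only [Sum.elim_inr]; rw [if_pos hu10, hui0, Real.log_one, h0, add_zero]
  have hκneg : ∀ a, κ a ≤ 0 := by
    rintro (i | i)
    · simp only [hκ, Sum.elim_inl]; linarith [lamle i]
    · simp only [hκ, Sum.elim_inr]
      split_ifs with h
      · have hlog : Real.log (u (x i)) ≤ 0 := Real.log_nonpos (hu0 _) (hu1 _)
        linarith [lamle i]
      · linarith [lamle i]
  have hcard : (Finset.image w Finset.univ).card ≤ n := by
    have himg : Finset.image w Finset.univ ⊆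
        Finset.image (fun i => w (Sum.inr i)) Finset.univ := by
      intro zz hz
      rw [Finset.mem_image] at hz ⊢
      obtain ⟨a, -, ha⟩ := hz
      rcases a with i | i
      · exact ⟨i0, Finset.mem_univ _, by rw [hwr, ← ha, hwl]⟩
      · exact ⟨i, Finset.mem_univ _, ha⟩
    calc (Finset.image w Finset.univ).card
        ≤ (Finset.image (fun i => w (Sum.inr i)) Finset.univ).card :=
          Finset.card_le_card himg
      _ ≤ Finset.univ.card := Finset.card_image_le
      _ = n := by simp
  have hbD : ∀ a, w a ≠ w (Sum.inr i0) → κ a ≤ -Real.log (n + 1) := by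
    rintro (i | i) hne
    · exact absurd (by rw [hwr, hwl]) hne
    · rw [hwr] at hne
      simp only [hw, Sum.elim_inr] at hne
      simp only [hκ, Sum.elim_inr]
      by_cases h : u (x i) ≠ 0
      · rw [dif_pos h] at hne
        rw [if_pos h]
        have hii0 : i ≠ i0 := by
          rintro rfl
          exact hne (by rw [ht0])
        have hlog : Real.log (u (x i)) ≤ 0 := Real.log_nonpos (hu0 _) (hu1 _)
        linarith [hb i hii0]
      · rw [dif_neg h] at hne
        exact absurd rfl hne
  have hν := isIf_of_family w κ (Sum.inr i0) hκr hκneg n hcard hbD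
  refine ⟨_, hν, ?_⟩
  funext ψ
  set c : ℝ := ψ (rbar r (topPt μ)) - 1 with hc
  have hct0 : c = ψ (t0 : Y) - 1 := by
    rw [hc, hTop]
    unfold rbar
    rw [dif_pos hxi0U]
  have key : ∀ i, lam i + Ffun r u ψ c (x i) =
      max (κ (Sum.inl i) + ψ ((w (Sum.inl i) : Xs) : Y))
          (κ (Sum.inr i) + ψ ((w (Sum.inr i) : Xs) : Y)) := by
    intro i
    by_cases h : u (x i) ≠ 0
    · have hxiU : x i ∈ U := hV2U (hsupp _ h)
      have hrbar : rbar r (x i) = ((r ⟨x i, hxiU⟩ : Xs) : Y) := by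
        unfold rbar; rw [dif_pos hxiU]
      simp only [Ffun, hκ, hw, Sum.elim_inl, Sum.elim_inr]
      rw [if_pos h, if_pos h, dif_pos h, hrbar, ← max_add_add_left]
      congr 1
      · rw [hct0]; ring
      · ring
    · have hwr2 : w (Sum.inr i) = t0 := by
        rw [hw]; simp only [Sum.elim_inr]; rw [dif_neg h]
      simp only [Ffun, hκ, hw, Sum.elim_inl, Sum.elim_inr]
      rw [if_neg h, if_neg h, dif_neg h, max_self, hct0]
      ring
  have hsum : (⨆ a, (κ a + ψ ((w a : Xs) : Y))) = ⨆ i, (lam i + Ffun r u ψ c (x i)) := by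
    apply le_antisymm
    · apply ciSup_le
      rintro (i | i)
      · calc κ (Sum.inl i) + ψ ((w (Sum.inl i) : Xs) : Y)
            ≤ max (κ (Sum.inl i) + ψ ((w (Sum.inl i) : Xs) : Y))
                  (κ (Sum.inr i) + ψ ((w (Sum.inr i) : Xs) : Y)) := le_max_left _ _
          _ = lam i + Ffun r u ψ c (x i) := (key i).symm
          _ ≤ _ := le_ciSup (fin_bdd (fun i => lam i + Ffun r u ψ c (x i))) i
      · calc κ (Sum.inr i) + ψ ((w (Sum.inr i) : Xs) : Y)
            ≤ max (κ (Sum.inl i) + ψ ((w (Sum.inl i) : Xs) : Y))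
                  (κ (Sum.inr i) + ψ ((w (Sum.inr i) : Xs) : Y)) := le_max_right _ _
          _ = lam i + Ffun r u ψ c (x i) := (key i).symm
          _ ≤ _ := le_ciSup (fin_bdd (fun i => lam i + Ffun r u ψ c (x i))) i
    · apply ciSup_le
      intro i
      rw [key i]
      apply max_le
      · exact le_ciSup (fin_bdd (fun a => κ a + ψ ((w a : Xs) : Y))) (Sum.inl i)
      · exact le_ciSup (fin_bdd (fun a => κ a + ψ ((w a : Xs) : Y))) (Sum.inr i)
  show (⨆ a, (κ a + (ψ.comp (inclMap Xs)) (w a))) = _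
  have hlhs : ∀ a, (ψ.comp (inclMap Xs)) (w a) = ψ ((w a : Xs) : Y) := fun a => rfl
  simp only [hlhs]
  rw [hsum]
  rw [Rfull, hμeq]
  rfl

lemma Rfull_eq (hUo : IsOpen U) (hsupp : ∀ y, u y ≠ 0 → y ∈ V2) (hV2U : V2 ⊆ U)
    (hu0 : ∀ y, 0 ≤ u y) (hXU : Xs ⊆ U)
    (hr : ∀ (z : U) (hz : (z : Y) ∈ Xs), r z = ⟨(z : Y), hz⟩)
    (huXs : ∀ y ∈ Xs, u y = 1)
    (μ : {μ : C(Y, ℝ) → ℝ // IsIf μ})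
    (hμ : μ.1 ∈ push (inclMap Xs) '' {ν : C(Xs, ℝ) → ℝ | IsIf ν}) :
    Rfull r u hUo hsupp hV2U hu0 μ = μ.1 := by
  obtain ⟨ν, hν, hpush⟩ := hμ
  obtain ⟨m, hm, z, κ0, j0, hinj, h00, hb0, rfl⟩ := hν
  haveI : Nonempty (Fin m) := ⟨j0⟩
  have hm1 : (1:ℝ) ≤ (m:ℝ) := by exact_mod_cast hm
  have hμeq : μ.1 = maxPlus κ0 (fun j => ((z j : Xs) : Y)) := by rw [← hpush]; rfl
  have hrbarXs : ∀ y, ∀ hy : y ∈ Xs, rbar r y = y := by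
    intro y hy
    unfold rbar
    rw [dif_pos (hXU hy), hr ⟨y, hXU hy⟩ hy]
  have hTopμ : topPt μ = ((z j0 : Xs) : Y) :=
    hasTop_unique (topPt_spec μ)
      (by rw [hμeq]; exact hasTop_maxPlus _ κ0 j0 h00 hb0)
  have κ0le : ∀ j, κ0 j ≤ 0 := by
    intro j
    by_cases h : j = j0
    · rw [h, h00]
    · refine (hb0 j h).trans ?_
      have hlog : (0:ℝ) ≤ Real.log ((m:ℝ) + 1) := Real.log_nonneg (by linarith)
      linarith
  funext ψ
  set c : ℝ := ψ (rbar r (topPt μ)) - 1 with hc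
  have hcval : c = ψ ((z j0 : Xs) : Y) - 1 := by
    rw [hc, hTopμ, hrbarXs _ (z j0).2]
  have hF : ∀ j : Fin m, Ffun r u ψ c ((z j : Xs) : Y) = max c (ψ ((z j : Xs) : Y)) := by
    intro j
    have h1 : u ((z j : Xs) : Y) = 1 := huXs _ (z j).2
    have hne : u ((z j : Xs) : Y) ≠ 0 := by rw [h1]; norm_num
    simp only [Ffun]
    rw [if_pos hne, h1, Real.log_one, add_zero, hrbarXs _ (z j).2]
  have hM : μ.1 ψ = ⨆ j, (κ0 j + ψ ((z j : Xs) : Y)) := by rw [hμeq]; rfl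
  have hMge : ψ ((z j0 : Xs) : Y) ≤ μ.1 ψ := by
    rw [hM]
    have h1 := le_ciSup (fin_bdd (fun j => κ0 j + ψ ((z j : Xs) : Y))) j0
    rw [h00, zero_add] at h1
    exact h1
  have hgoal : (⨆ j, (κ0 j + Ffun r u ψ c ((z j : Xs) : Y))) = μ.1 ψ := by
    apply le_antisymm
    · apply ciSup_le
      intro j
      rw [hF j, ← max_add_add_left]
      apply max_le
      · have h2 : c ≤ μ.1 ψ := by rw [hcval]; linarith
        linarith [κ0le j]
      · rw [hM]
        exact le_ciSup (fin_bdd (fun j => κ0 j + ψ ((z j : Xs) : Y))) j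
    · rw [hM]
      apply ciSup_le
      intro j
      calc κ0 j + ψ ((z j : Xs) : Y) ≤ κ0 j + Ffun r u ψ c ((z j : Xs) : Y) := by
            rw [hF j]; exact add_le_add le_rfl (le_max_right _ _)
        _ ≤ _ := le_ciSup (fin_bdd (fun j => κ0 j + Ffun r u ψ c ((z j : Xs) : Y))) j
  calc Rfull r u hUo hsupp hV2U hu0 μ ψ
      = ⨆ j, (κ0 j + Ffun r u ψ c ((z j : Xs) : Y)) := by rw [Rfull, hμeq]; rfl
    _ = μ.1 ψ := hgoal

lemma continuousAt_Rfull (hUo : IsOpen U) (hsupp : ∀ y, u y ≠ 0 → y ∈ V2) (hV2U : V2 ⊆ U)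
    (hu0 : ∀ y, 0 ≤ u y) (ψ : C(Y, ℝ)) (μ0 : {μ : C(Y, ℝ) → ℝ // IsIf μ})
    (hμ0 : topPt μ0 ∈ U) :
    ContinuousAt (fun μ : {μ : C(Y, ℝ) → ℝ // IsIf μ} =>
      Rfull r u hUo hsupp hV2U hu0 μ ψ) μ0 := by
  unfold ContinuousAt
  rw [Metric.tendsto_nhds]
  intro ε hε
  set p0 := topPt μ0 with hp0
  set F0 : C(Y, ℝ) := Fmap r u ψ (ψ (rbar r p0) - 1) hUo hsupp hV2U hu0 with hF0
  have hro : ContinuousOn (fun y => ψ (rbar r y)) U :=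
    (map_continuous ψ).comp_continuousOn (continuousOn_rbar r)
  set O := U ∩ (fun y => ψ (rbar r y)) ⁻¹' (Metric.ball (ψ (rbar r p0)) (ε / 4)) with hO
  have hOopen : IsOpen O := hro.isOpen_inter_preimage hUo Metric.isOpen_ball
  have hp0O : p0 ∈ O := ⟨hμ0, by simp [Metric.mem_ball]; positivity⟩
  obtain ⟨φO, hφ1, hφ2, hφ3⟩ := exists_small_fun Oᶜ {p0} hOopen.isClosed_compl
    isClosed_singleton (by
      rw [Set.disjoint_singleton_right]
      simpa using hp0O)
  have hcont1 : Continuous (fun μ : {μ : C(Y, ℝ) → ℝ // IsIf μ} => μ.1 φO) :=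
    (continuous_apply φO).comp continuous_subtype_val
  have hcont2 : Continuous (fun μ : {μ : C(Y, ℝ) → ℝ // IsIf μ} => μ.1 F0) :=
    (continuous_apply F0).comp continuous_subtype_val
  have hN : {μ : {μ : C(Y, ℝ) → ℝ // IsIf μ} |
      -s0 / 2 < μ.1 φO ∧ |μ.1 F0 - μ0.1 F0| < ε / 4} ∈ 𝓝 μ0 := by
    apply IsOpen.mem_nhds
    · apply IsOpen.inter (isOpen_lt continuous_const hcont1)
      exact isOpen_lt ((hcont2.sub continuous_const).abs) continuous_const
    · constructor
      · rw [topPt_spec μ0 φO hφ1, hφ3 p0 rfl]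
        linarith [s0_pos]
      · simp; positivity
  apply Filter.eventually_of_mem hN
  rintro μ ⟨hμ1, hμ2⟩
  have htopO : topPt μ ∈ O :=
    hasTop_mem (topPt_spec μ) φO hφ1 (fun y hy => hφ2 y hy) hμ1
  have hcc : |ψ (rbar r (topPt μ)) - ψ (rbar r p0)| < ε / 4 := by
    have h1 := htopO.2
    simp only [Set.mem_preimage, Metric.mem_ball, Real.dist_eq] at h1
    exact h1
  set cμ := ψ (rbar r (topPt μ)) - 1 with hcμ
  set c0 := ψ (rbar r p0) - 1 with hc0
  have hpt : ∀ y, |Ffun r u ψ cμ y - Ffun r u ψ c0 y| ≤ |cμ - c0| := by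
    intro y
    by_cases h : u y ≠ 0
    · simp only [Ffun]
      rw [if_pos h, if_pos h]
      exact abs_max_sub_max_le_abs _ _ _
    · simp only [Ffun]
      rw [if_neg h, if_neg h]
  have h1 : |μ.1 (Fmap r u ψ cμ hUo hsupp hV2U hu0) - μ.1 F0| ≤ |cμ - c0| :=
    μ.2.abs_sub_le _ _ _ hpt
  have hccc : |cμ - c0| < ε / 4 := by
    rw [hcμ, hc0]
    have : ψ (rbar r (topPt μ)) - 1 - (ψ (rbar r p0) - 1)
        = ψ (rbar r (topPt μ)) - ψ (rbar r p0) := by ring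
    rw [this]
    exact hcc
  rw [Real.dist_eq]
  show |μ.1 (Fmap r u ψ cμ hUo hsupp hV2U hu0) - μ0.1 F0| < ε
  calc |μ.1 (Fmap r u ψ cμ hUo hsupp hV2U hu0) - μ0.1 F0|
      ≤ |μ.1 (Fmap r u ψ cμ hUo hsupp hV2U hu0) - μ.1 F0| + |μ.1 F0 - μ0.1 F0| := by
        exact abs_sub_le _ _ _
    _ < ε / 4 + ε / 4 := by
        apply add_lt_add_of_le_of_lt
        · exact h1.trans_lt hccc |>.le
        · exact hμ2
    _ < ε := by linarith

end Main2

end AuxIPM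

/-- if `X` is a closed subspace of a compact Hausdorff space `Y` which is a
retract of an open set `U ⊇ X`, then `I_f(X)` (identified with its image in `I_f(Y)` under
the map induced by the inclusion) is a neighborhood retract of `I_f(Y)`. -/
theorem stmt15 {Y : Type*} [TopologicalSpace Y] [CompactSpace Y] [T2Space Y]
    (Xs : Set Y) (hXc : IsClosed Xs) (U : Set Y) (hU : IsOpen U) (hXU : Xs ⊆ U)
    (r : C(U, Xs)) (hr : ∀ (z : U) (hz : (z : Y) ∈ Xs), r z = ⟨(z : Y), hz⟩) :
    ∃ W : Set {μ : C(Y, ℝ) → ℝ // IsIf μ}, IsOpen W ∧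
      (∀ μ : {μ : C(Y, ℝ) → ℝ // IsIf μ},
        μ.1 ∈ push (inclMap Xs) '' {ν : C(Xs, ℝ) → ℝ | IsIf ν} → μ ∈ W) ∧
      ∃ R : W → C(Y, ℝ) → ℝ, Continuous R ∧
        (∀ μ : W, R μ ∈ push (inclMap Xs) '' {ν : C(Xs, ℝ) → ℝ | IsIf ν}) ∧
        (∀ μ : W, (μ : {μ : C(Y, ℝ) → ℝ // IsIf μ}).1 ∈
            push (inclMap Xs) '' {ν : C(Xs, ℝ) → ℝ | IsIf ν} →
          R μ = (μ : {μ : C(Y, ℝ) → ℝ // IsIf μ}).1) := by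
  classical
  obtain ⟨V1, hV1o, hXV1, hV1cU⟩ := normal_exists_closure_subset hXc hU hXU
  obtain ⟨V2, hV2o, hV1cV2, hV2cU⟩ := normal_exists_closure_subset isClosed_closure hU hV1cU
  have hV1U : V1 ⊆ U := subset_closure.trans hV1cU
  have hV2U : V2 ⊆ U := subset_closure.trans hV2cU
  -- the bump function u
  obtain ⟨f, hf0, hf1, hf01⟩ := exists_continuous_zero_one_of_isClosed
    (isClosed_closure (s := V1)) (isClosed_compl_iff.mpr hV2o)
    (Set.disjoint_left.mpr fun y hy hyc => hyc (hV1cV2 hy))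
  set u : C(Y, ℝ) := ⟨fun y => 1 - f y, by continuity⟩ with hu
  have hu0 : ∀ y, 0 ≤ u y := by
    intro y; have := (hf01 y).2; simp [hu]; linarith
  have hu1 : ∀ y, u y ≤ 1 := by
    intro y; have := (hf01 y).1; simp [hu]; linarith
  have huV1 : ∀ y ∈ V1, u y = 1 := by
    intro y hy
    have : f y = 0 := hf0 (subset_closure hy)
    simp [hu, this]
  have huXs : ∀ y ∈ Xs, u y = 1 := fun y hy => huV1 y (hXV1 hy)
  have hsupp : ∀ y, u y ≠ 0 → y ∈ V2 := by
    intro y hne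
    by_contra hc
    have : f y = 1 := hf1 hc
    exact hne (by simp [hu, this])
  -- the test function detecting W
  obtain ⟨φs, hφs1, hφs2, hφs3⟩ := exists_small_fun V1ᶜ Xs (isClosed_compl_iff.mpr hV1o)
    hXc (Set.disjoint_left.mpr fun y hy hyXs => hy (hXV1 hyXs))
  set W : Set {μ : C(Y, ℝ) → ℝ // IsIf μ} := {μ | -s0 / 2 < μ.1 φs} with hW
  have hWopen : IsOpen W :=
    isOpen_lt continuous_const ((continuous_apply φs).comp continuous_subtype_val)
  have hmemW : ∀ μ : {μ : C(Y, ℝ) → ℝ // IsIf μ},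
      μ.1 ∈ push (inclMap Xs) '' {ν : C(Xs, ℝ) → ℝ | IsIf ν} → μ ∈ W := by
    intro μ hμ
    have hXsT := topPt_mem_Xs μ hμ
    show -s0 / 2 < μ.1 φs
    rw [topPt_spec μ φs hφs1, hφs3 _ hXsT]
    linarith [s0_pos]
  have hWtop : ∀ μ ∈ W, topPt μ ∈ V1 := fun μ hμ =>
    hasTop_mem (topPt_spec μ) φs hφs1 (fun y hy => hφs2 y hy) hμ
  refine ⟨W, hWopen, hmemW, fun μ => Rfull r u hU hsupp hV2U hu0 μ.1, ?_, ?_, ?_⟩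
  · -- continuity
    apply continuous_pi
    intro ψ
    rw [continuous_iff_continuousAt]
    intro μ0
    have h1 := continuousAt_Rfull r u hU hsupp hV2U hu0 ψ μ0.1
      (hV1U (hWtop μ0.1 μ0.2))
    have h2 : ContinuousAt (Subtype.val : W → {μ : C(Y, ℝ) → ℝ // IsIf μ}) μ0 :=
      continuous_subtype_val.continuousAt
    exact h1.comp h2
  · -- lands in the image
    intro μ
    obtain ⟨ν, hν, hpush⟩ := Rfull_mem r u hU hsupp hV2U hu0 hu1 huV1 hV1U μ.1
      (hWtop μ.1 μ.2)
    exact ⟨ν, hν, hpush⟩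
  · -- identity on the image
    intro μ hμ
    exact Rfull_eq r u hU hsupp hV2U hu0 hXU hr huXs μ.1 hμ
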